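/- The second derivative at s = 1 of s ↦ ₂F₁(1,1;s;z) equals (2 Li₂(z) + log²(1-z))/(1-z) for real z with |z| < 1; equivalently, ∑_{n=1}^∞ (H_n² + H_{n,2}) z^n = (2 Li₂(z) + log²(1-z))/(1-z). -/

import Mathlib

/-- The `n`-th harmonic number `H_n = ∑_{k=1}^n 1/k`. -/
noncomputable def H (n : ℕ) : ℝ := ∑ k ∈ Finset.range n, (1 : ℝ) / (k + 1)

/-- The `n`-th second-order harmonic number `H_{n,2} = ∑_{k=1}^n 1/k²`. -/
noncomputable def H2 (n : ℕ) : ℝ := ∑ k ∈ Finset.range n, (1 : ℝ) / ((k : ℝ) + 1) ^ 2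

/-- The dilogarithm `Li₂(z) = ∑_{n=1}^∞ z^n / n²`. -/
noncomputable def Li2 (z : ℝ) : ℝ := ∑' n : ℕ, z ^ (n + 1) / ((n : ℝ) + 1) ^ 2

/-- The Pochhammer symbol `(a)_k = a(a+1)⋯(a+k-1)` for real `a`. -/
noncomputable def poch (a : ℝ) (k : ℕ) : ℝ := ∏ j ∈ Finset.range k, (a + j)

noncomputable def Lh (n : ℕ) (s : ℝ) : ℝ := ∑ j ∈ Finset.range n, (s + j)⁻¹
noncomputable def Qh (n : ℕ) (s : ℝ) : ℝ := ∑ j ∈ Finset.range n, ((s + j) ^ 2)⁻¹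
noncomputable def F1x (z : ℝ) (n : ℕ) (s : ℝ) : ℝ :=
  -((Nat.factorial n : ℝ) / poch s n * Lh n s) * z ^ n
noncomputable def F2x (z : ℝ) (n : ℕ) (s : ℝ) : ℝ :=
  (Nat.factorial n : ℝ) / poch s n * (Lh n s ^ 2 + Qh n s) * z ^ n

lemma poch_pos {s : ℝ} (hs : 0 < s) (n : ℕ) : 0 < poch s n :=
  Finset.prod_pos fun j _ => by positivity

lemma poch_one (n : ℕ) : poch 1 n = Nat.factorial n := by
  rw [poch, ← Finset.prod_range_add_one_eq_factorial]
  push_cast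
  exact Finset.prod_congr rfl fun j _ => by ring

lemma Lh_one (n : ℕ) : Lh n 1 = H n := by
  unfold Lh H
  refine Finset.sum_congr rfl fun k _ => ?_
  rw [one_div, add_comm]

lemma Qh_one (n : ℕ) : Qh n 1 = H2 n := by
  unfold Qh H2
  refine Finset.sum_congr rfl fun k _ => ?_
  rw [one_div, add_comm]

lemma hasDerivAt_poch (n : ℕ) {s : ℝ} (hs : 0 < s) :
    HasDerivAt (fun x => poch x n) (poch s n * Lh n s) s := by
  induction n with
  | zero => simpa [poch, Lh] using hasDerivAt_const s (1 : ℝ)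
  | succ n ih =>
      have heq : (fun x : ℝ => poch x (n + 1)) = fun x => poch x n * (x + n) := by
        funext x; rw [poch, Finset.prod_range_succ]; rfl
      rw [heq]
      have h1 : HasDerivAt (fun x : ℝ => x + (n : ℝ)) 1 s := (hasDerivAt_id s).add_const _
      have h := ih.fun_mul h1
      convert h using 1
      all_goals try rfl
      have hne : s + (n : ℝ) ≠ 0 := by positivity
      rw [poch, Finset.prod_range_succ, Lh, Lh, Finset.sum_range_succ]
      unfold poch
      field_simp [poch]

lemma hasDerivAt_Lh (n : ℕ) {s : ℝ} (hs : 0 < s) :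
    HasDerivAt (fun x => Lh n x) (-Qh n s) s := by
  have h : ∀ j ∈ Finset.range n,
      HasDerivAt (fun x : ℝ => (x + (j : ℝ))⁻¹) (-((s + j) ^ 2)⁻¹) s := by
    intro j _
    have := ((hasDerivAt_id s).add_const (j : ℝ)).fun_inv (by positivity)
    simp only [id] at this
    convert this using 1
    all_goals try rfl
    rw [div_eq_mul_inv]; ring
  have := HasDerivAt.fun_sum h
  simpa [Lh, Qh, Finset.sum_neg_distrib] using this

lemma hasDerivAt_g (n : ℕ) {s : ℝ} (hs : 0 < s) :
    HasDerivAt (fun x => (Nat.factorial n : ℝ) / poch x n)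
      (-((Nat.factorial n : ℝ) / poch s n * Lh n s)) s := by
  have h := (hasDerivAt_const s ((Nat.factorial n : ℕ) : ℝ)).fun_div
    (hasDerivAt_poch n hs) (poch_pos hs n).ne'
  convert h using 1
  all_goals try rfl
  have hp := (poch_pos hs n).ne'
  field_simp
  ring

lemma hasDerivAt_gL (n : ℕ) {s : ℝ} (hs : 0 < s) :
    HasDerivAt (fun x => -((Nat.factorial n : ℝ) / poch x n * Lh n x))
      ((Nat.factorial n : ℝ) / poch s n * (Lh n s ^ 2 + Qh n s)) s := by
  have h := ((hasDerivAt_g n hs).fun_mul (hasDerivAt_Lh n hs)).fun_neg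
  convert h using 1
  all_goals try rfl
  ring

lemma g_nonneg {s : ℝ} (hs : 0 < s) (n : ℕ) : 0 ≤ (Nat.factorial n : ℝ) / poch s n :=
  div_nonneg (Nat.cast_nonneg _) (poch_pos hs n).le

lemma g_le {s : ℝ} (hs : 1/2 < s) (n : ℕ) :
    (Nat.factorial n : ℝ) / poch s n ≤ 2 * (n + 1) := by
  have hsp : 0 < s := by linarith
  rw [div_le_iff₀ (poch_pos hsp n)]
  cases n with
  | zero => simp [poch]
  | succ m =>
      have key : (Nat.factorial m : ℝ) / 2 ≤ poch s (m + 1) := by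
        rw [poch, Finset.prod_range_succ']
        have h1 : (Nat.factorial m : ℝ) ≤ ∏ j ∈ Finset.range m, (s + (↑(j + 1) : ℝ)) := by
          rw [← Finset.prod_range_add_one_eq_factorial]
          push_cast
          refine Finset.prod_le_prod (fun j _ => by positivity) fun j _ => by push_cast; linarith
        have h2 : (1 : ℝ) / 2 ≤ s + (0 : ℕ) := by push_cast; linarith
        calc (Nat.factorial m : ℝ) / 2 = (Nat.factorial m : ℝ) * (1/2) := by ring
          _ ≤ (∏ j ∈ Finset.range m, (s + (↑(j + 1) : ℝ))) * (s + (0:ℕ)) := by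
              apply mul_le_mul h1 h2 (by norm_num)
              exact Finset.prod_nonneg fun j _ => by positivity
      calc (Nat.factorial (m+1) : ℝ) = (m + 1) * Nat.factorial m := by
            push_cast [Nat.factorial_succ]; ring
        _ ≤ 2 * (↑(m+1) + 1) * ((Nat.factorial m : ℝ) / 2) := by
            have : (0:ℝ) ≤ Nat.factorial m := by positivity
            push_cast; nlinarith
        _ ≤ 2 * (↑(m+1) + 1) * poch s (m+1) := by
            apply mul_le_mul_of_nonneg_left key; positivity

lemma Lh_nonneg {s : ℝ} (hs : 0 < s) (n : ℕ) : 0 ≤ Lh n s :=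
  Finset.sum_nonneg fun j _ => by positivity

lemma Lh_le {s : ℝ} (hs : 1/2 < s) (n : ℕ) : Lh n s ≤ 2 * n := by
  have : Lh n s ≤ ∑ _j ∈ Finset.range n, (2 : ℝ) := by
    refine Finset.sum_le_sum fun j _ => ?_
    rw [inv_le_comm₀ (by positivity) (by norm_num)]
    have : (0:ℝ) ≤ j := Nat.cast_nonneg j
    linarith
  simpa [mul_comm] using this

lemma Qh_nonneg {s : ℝ} (hs : 0 < s) (n : ℕ) : 0 ≤ Qh n s :=
  Finset.sum_nonneg fun j _ => by positivity

lemma Qh_le {s : ℝ} (hs : 1/2 < s) (n : ℕ) : Qh n s ≤ 4 * n := by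
  have : Qh n s ≤ ∑ _j ∈ Finset.range n, (4 : ℝ) := by
    refine Finset.sum_le_sum fun j _ => ?_
    rw [inv_le_comm₀ (by positivity) (by norm_num)]
    have h0 : (0:ℝ) ≤ j := Nat.cast_nonneg j
    nlinarith
  simpa [mul_comm] using this

lemma H_nonneg (n : ℕ) : 0 ≤ H n := Finset.sum_nonneg fun k _ => by positivity

lemma H_le (n : ℕ) : H n ≤ n := by
  have : H n ≤ ∑ _k ∈ Finset.range n, (1:ℝ) := by
    refine Finset.sum_le_sum fun k _ => ?_
    rw [div_le_one (by positivity)]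
    have : (0:ℝ) ≤ k := Nat.cast_nonneg k
    linarith
  simpa using this

lemma H2_nonneg (n : ℕ) : 0 ≤ H2 n := Finset.sum_nonneg fun k _ => by positivity

lemma H2_le (n : ℕ) : H2 n ≤ n := by
  have : H2 n ≤ ∑ _k ∈ Finset.range n, (1:ℝ) := by
    refine Finset.sum_le_sum fun k _ => ?_
    rw [div_le_one (by positivity)]
    have : (0:ℝ) ≤ k := Nat.cast_nonneg k
    nlinarith
  simpa using this

lemma H_succ (n : ℕ) : H (n+1) = H n + 1/(n+1) := Finset.sum_range_succ _ n

lemma H2_succ (n : ℕ) : H2 (n+1) = H2 n + 1/((n:ℝ)+1)^2 := Finset.sum_range_succ _ n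

lemma summable_npow_geo (k : ℕ) {r : ℝ} (h0 : 0 < r) (h1 : r < 1) :
    Summable (fun n : ℕ => ((n : ℝ) + 1) ^ k * r ^ n) := by
  have h := summable_pow_mul_geometric_of_norm_lt_one (R := ℝ) k
    (by rwa [Real.norm_eq_abs, abs_of_pos h0] : ‖r‖ < 1)
  have h2 := ((summable_nat_add_iff 1).2 h).mul_left r⁻¹
  refine h2.congr fun n => ?_
  push_cast
  field_simp
  ring

lemma key_sum (n : ℕ) :
    ∑ k ∈ Finset.range (n + 1), (1 : ℝ) / ((k + 1) * ((n - k : ℕ) + 1))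
      = 2 / (n + 2) * H (n + 1) := by
  have h1 : ∀ k ∈ Finset.range (n + 1),
      (1 : ℝ) / ((k + 1) * ((n - k : ℕ) + 1))
        = 1 / (n + 2) * ((1 : ℝ) / (k + 1) + 1 / ((n - k : ℕ) + 1)) := by
    intro k hk
    have hk' : k ≤ n := Nat.lt_succ_iff.mp (Finset.mem_range.mp hk)
    have hc : ((n - k : ℕ) : ℝ) = (n : ℝ) - k := by
      push_cast [Nat.cast_sub hk']; ring
    rw [hc]
    have e1 : (k : ℝ) + 1 ≠ 0 := by positivity
    have e2 : (n : ℝ) - k + 1 ≠ 0 := by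
      have : (k : ℝ) ≤ n := by exact_mod_cast hk'
      nlinarith
    have e3 : (n : ℝ) + 2 ≠ 0 := by positivity
    field_simp
    ring
  rw [Finset.sum_congr rfl h1, ← Finset.mul_sum, Finset.sum_add_distrib]
  have h2 : ∑ k ∈ Finset.range (n + 1), (1 : ℝ) / ((n - k : ℕ) + 1)
      = ∑ k ∈ Finset.range (n + 1), (1 : ℝ) / (k + 1) := by
    have := Finset.sum_range_reflect (fun j => (1 : ℝ) / (j + 1)) (n + 1)
    simpa using this
  rw [h2]
  rw [show ∑ k ∈ Finset.range (n + 1), (1 : ℝ) / (k + 1) = H (n+1) from rfl]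
  ring

lemma summable_dom {f : ℕ → ℝ} (k : ℕ) (C : ℝ) {r : ℝ} (h0 : 0 < r) (h1 : r < 1)
    (hf : ∀ n, |f n| ≤ C * (((n : ℝ) + 1) ^ k * r ^ n)) : Summable f :=
  Summable.of_norm_bounded ((summable_npow_geo k h0 h1).mul_left C) hf

lemma a_diff (n : ℕ) :
    (H (n + 2) ^ 2 + H2 (n + 2)) - (H (n + 1) ^ 2 + H2 (n + 1))
      = 2 * H (n + 2) / ((n : ℝ) + 2) := by
  have h1 := H_succ (n + 1)
  have h2 := H2_succ (n + 1)
  push_cast at h1 h2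
  rw [h1, h2]
  have hne : ((n : ℝ) + 1 + 1) ≠ 0 := by positivity
  field_simp
  ring

set_option maxHeartbeats 1000000 in
lemma part2 (z : ℝ) (hz : |z| < 1) :
    ∑' n : ℕ, (H (n + 1) ^ 2 + H2 (n + 1)) * z ^ (n + 1)
      = (2 * Li2 z + Real.log (1 - z) ^ 2) / (1 - z) := by
  set r : ℝ := (1 + |z|) / 2 with hrdef
  have hr0 : 0 < r := by positivity
  have hr1 : r < 1 := by rw [hrdef]; linarith
  have hzr : |z| ≤ r := by rw [hrdef]; linarith [abs_nonneg z]
  have hzrn : ∀ n : ℕ, |z| ^ (n + 1) ≤ r ^ n := fun n => by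
    calc |z| ^ (n + 1) ≤ r ^ (n + 1) := pow_le_pow_left₀ (abs_nonneg z) hzr _
      _ = r ^ n * r := by ring
      _ ≤ r ^ n * 1 := by nlinarith [pow_nonneg hr0.le n]
      _ = r ^ n := by ring
  -- basic series
  set e : ℕ → ℝ := fun n => z ^ (n + 1) / ((n : ℝ) + 1) ^ 2 with hedef
  set f : ℕ → ℝ := fun n => z ^ (n + 1) / ((n : ℝ) + 1) with hfdef
  set c : ℕ → ℝ := fun n => 2 / ((n : ℝ) + 2) * H (n + 1) * z ^ (n + 2) with hcdef
  set D : ℕ → ℝ := fun m => 2 * H (m + 1) / ((m : ℝ) + 1) * z ^ (m + 1) with hDdef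
  set a : ℕ → ℝ := fun m => H m ^ 2 + H2 m with hadef
  have habse : ∀ n, |e n| ≤ 1 * (((n : ℝ) + 1) ^ 0 * r ^ n) := by
    intro n
    have h1 : |e n| ≤ |z| ^ (n + 1) := by
      rw [hedef]; simp only [abs_div, abs_pow]
      exact div_le_self (pow_nonneg (abs_nonneg z) _)
        (by rw [abs_of_nonneg (by positivity)]; nlinarith [Nat.cast_nonneg (α := ℝ) n])
    simpa using h1.trans (hzrn n)
  have habsf : ∀ n, |f n| ≤ 1 * (((n : ℝ) + 1) ^ 0 * r ^ n) := by
    intro n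
    have h1 : |f n| ≤ |z| ^ (n + 1) := by
      rw [hfdef]; simp only [abs_div, abs_pow]
      exact div_le_self (pow_nonneg (abs_nonneg z) _)
        (by rw [abs_of_nonneg (by positivity)]; linarith [Nat.cast_nonneg (α := ℝ) n])
    simpa using h1.trans (hzrn n)
  have hsume : Summable e := summable_dom 0 1 hr0 hr1 habse
  have hsumf : Summable f := summable_dom 0 1 hr0 hr1 habsf
  have hnormf : Summable fun n => ‖f n‖ := by
    refine summable_dom 0 1 hr0 hr1 fun n => ?_
    rw [Real.norm_eq_abs, abs_abs]
    exact habsf n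
  -- Cauchy product for log^2
  have hlogsum : HasSum f (-Real.log (1 - z)) := by
    simpa [hfdef] using Real.hasSum_pow_div_log_of_abs_lt_one hz
  have hlog : Real.log (1 - z) ^ 2 = ∑' n, c n := by
    have hcp := tsum_mul_tsum_eq_tsum_sum_range_of_summable_norm hnormf hnormf
    rw [hlogsum.tsum_eq] at hcp
    have h2 : (-Real.log (1 - z)) * (-Real.log (1 - z)) = Real.log (1 - z) ^ 2 := by ring
    rw [h2] at hcp
    rw [hcp]
    refine tsum_congr fun n => ?_
    have hterm : ∀ k ∈ Finset.range (n + 1),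
        f k * f (n - k) = (1 : ℝ) / ((k + 1) * ((n - k : ℕ) + 1)) * z ^ (n + 2) := by
      intro k hk
      have hk' : k ≤ n := Nat.lt_succ_iff.mp (Finset.mem_range.mp hk)
      have hp : z ^ (k + 1) * z ^ ((n - k) + 1) = z ^ (n + 2) := by
        rw [← pow_add]; congr 1; omega
      rw [hfdef]
      simp only
      rw [div_mul_div_comm, hp, div_eq_mul_one_div, mul_comm]
    rw [Finset.sum_congr rfl hterm, ← Finset.sum_mul, key_sum n, hcdef]
  have hzrn2 : ∀ n : ℕ, |z| ^ (n + 2) ≤ r ^ n := fun n => by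
    calc |z| ^ (n + 2) = |z| ^ (n + 1) * |z| := by ring
      _ ≤ |z| ^ (n + 1) * 1 := by
          have := pow_nonneg (abs_nonneg z) (n + 1); nlinarith [abs_nonneg z]
      _ = |z| ^ (n + 1) := by ring
      _ ≤ r ^ n := hzrn n
  have habsc : ∀ n, |c n| ≤ 1 * (((n : ℝ) + 1) ^ 1 * r ^ n) := by
    intro n
    have h0 : (0:ℝ) ≤ (n:ℝ) := Nat.cast_nonneg n
    have hH1 := H_nonneg (n + 1); have hH2 := H_le (n + 1)
    have hcast : ((n + 1 : ℕ) : ℝ) = (n : ℝ) + 1 := by push_cast; ring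
    rw [hcast] at hH2
    have h1 : |c n| = 2 / ((n : ℝ) + 2) * H (n + 1) * |z| ^ (n + 2) := by
      rw [hcdef]; simp only
      rw [abs_mul, abs_pow, abs_of_nonneg (by positivity)]
    rw [h1]
    have h2 : 2 / ((n : ℝ) + 2) * H (n + 1) ≤ (n : ℝ) + 1 := by
      have h3 : 2 / ((n : ℝ) + 2) ≤ 1 := by
        rw [div_le_one (by positivity)]; linarith
      nlinarith
    have := hzrn2 n
    have hpow : (0:ℝ) ≤ |z| ^ (n+2) := pow_nonneg (abs_nonneg z) _
    have hrn : (0:ℝ) ≤ r ^ n := pow_nonneg hr0.le n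
    nlinarith
  have hsumc : Summable c := summable_dom 1 1 hr0 hr1 habsc
  have habsD : ∀ m, |D m| ≤ 2 * (((m : ℝ) + 1) ^ 0 * r ^ m) := by
    intro m
    have h0 : (0:ℝ) ≤ (m:ℝ) := Nat.cast_nonneg m
    have hH1 := H_nonneg (m + 1); have hH2 := H_le (m + 1)
    have hcast : ((m + 1 : ℕ) : ℝ) = (m : ℝ) + 1 := by push_cast; ring
    rw [hcast] at hH2
    have h1 : |D m| = 2 * H (m + 1) / ((m : ℝ) + 1) * |z| ^ (m + 1) := by
      rw [hDdef]; simp only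
      rw [abs_mul, abs_pow, abs_of_nonneg (by positivity)]
    rw [h1]
    have h2 : 2 * H (m + 1) / ((m : ℝ) + 1) ≤ 2 := by
      rw [div_le_iff₀ (by positivity : (0:ℝ) < (m:ℝ)+1)]; nlinarith
    have := hzrn m
    have hpow : (0:ℝ) ≤ |z| ^ (m+1) := pow_nonneg (abs_nonneg z) _
    have hrm : (0:ℝ) ≤ r ^ m := pow_nonneg hr0.le m
    nlinarith
  have hsumD : Summable D := summable_dom 0 2 hr0 hr1 habsD
  have habst : ∀ n, |a (n + 1) * z ^ (n + 1)| ≤ 2 * (((n : ℝ) + 1) ^ 2 * r ^ n) := by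
    intro n
    have h0 : (0:ℝ) ≤ (n:ℝ) := Nat.cast_nonneg n
    have hH1 := H_nonneg (n + 1); have hH2 := H_le (n + 1)
    have hG1 := H2_nonneg (n + 1); have hG2 := H2_le (n + 1)
    have hcast : ((n + 1 : ℕ) : ℝ) = (n : ℝ) + 1 := by push_cast; ring
    rw [hcast] at hH2 hG2
    have h1 : |a (n + 1) * z ^ (n + 1)| = a (n + 1) * |z| ^ (n + 1) := by
      rw [abs_mul, abs_pow, abs_of_nonneg (by rw [hadef]; positivity)]
    rw [h1]
    have h2 : a (n + 1) ≤ 2 * ((n : ℝ) + 1) ^ 2 := by rw [hadef]; simp only; nlinarith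
    have := hzrn n
    have hpow : (0:ℝ) ≤ |z| ^ (n+1) := pow_nonneg (abs_nonneg z) _
    have hrn : (0:ℝ) ≤ r ^ n := pow_nonneg hr0.le n
    have ha0 : 0 ≤ a (n + 1) := by rw [hadef]; positivity
    nlinarith
  have hsumt : Summable (fun n => a (n + 1) * z ^ (n + 1)) :=
    summable_dom 2 2 hr0 hr1 habst
  -- value of ∑' D
  have hsplit : ∀ m : ℕ, D (m + 1) = 2 * e (m + 1) + c m := by
    intro m
    rw [hDdef, hedef, hcdef]; simp only
    rw [H_succ (m + 1)]
    push_cast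
    have hne : ((m : ℝ) + 2) ≠ 0 := by positivity
    field_simp
    ring
  have hsum2e1 : Summable (fun m => 2 * e (m + 1)) :=
    ((summable_nat_add_iff 1).2 hsume).mul_left 2
  have hLi2e : Li2 z = ∑' n, e n := by simp only [hedef]; rw [Li2]
  have hDval : ∑' m, D m = 2 * Li2 z + Real.log (1 - z) ^ 2 := by
    rw [Summable.tsum_eq_zero_add hsumD]
    rw [tsum_congr hsplit, Summable.tsum_add hsum2e1 hsumc]
    have h2 : ∑' m, 2 * e (m + 1) = 2 * Li2 z - 2 * e 0 := by
      have h3 := Summable.tsum_eq_zero_add (hsume.mul_left 2)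
      have h4 : ∑' m, 2 * e m = 2 * Li2 z := by rw [tsum_mul_left, hLi2e]
      rw [h4] at h3
      linarith
    have hD0 : D 0 = 2 * z := by rw [hDdef]; simp [H]
    have he0 : e 0 = z := by rw [hedef]; simp
    rw [h2, hD0, he0, ← hlog]
    ring
  -- telescoping
  have hane : ∀ n : ℕ, a (n + 2) - a (n + 1) = 2 * H (n + 2) / ((n : ℝ) + 2) := by
    intro n
    rw [hadef]
    exact a_diff n
  have hz1 : (1 : ℝ) - z ≠ 0 := by
    have := (abs_lt.mp hz).2; linarith
  show ∑' n : ℕ, a (n + 1) * z ^ (n + 1) = (2 * Li2 z + Real.log (1 - z) ^ 2) / (1 - z)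
  rw [eq_div_iff hz1, ← hDval]
  have hT1 : ∑' n, a (n + 1) * z ^ (n + 1) = a 1 * z + ∑' n, a (n + 2) * z ^ (n + 2) := by
    rw [Summable.tsum_eq_zero_add hsumt]; norm_num
  have hT2 : (∑' n, a (n + 1) * z ^ (n + 1)) * z = ∑' n, a (n + 1) * z ^ (n + 2) := by
    rw [← tsum_mul_right]; exact tsum_congr fun n => by rw [pow_succ]; ring
  have hsub1 : Summable (fun n => a (n + 2) * z ^ (n + 2)) := (summable_nat_add_iff 1).2 hsumt
  have hsub2 : Summable (fun n => a (n + 1) * z ^ (n + 2)) :=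
    (hsumt.mul_right z).congr fun n => by ring
  have hDsum : ∑' m, D m = a 1 * z + ∑' n, (a (n + 2) * z ^ (n + 2) - a (n + 1) * z ^ (n + 2)) := by
    rw [Summable.tsum_eq_zero_add hsumD]
    congr 1
    · rw [hDdef, hadef]; simp [H, H2]; norm_num
    · refine tsum_congr fun n => ?_
      rw [show a (n + 2) * z ^ (n + 2) - a (n + 1) * z ^ (n + 2)
            = (a (n + 2) - a (n + 1)) * z ^ (n + 2) by ring, hane n, hDdef]
      simp only
      rw [H_succ (n + 1)]
      push_cast
      ring
  rw [hDsum, Summable.tsum_sub hsub1 hsub2]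
  rw [show (∑' n, a (n+1) * z^(n+1)) * (1 - z)
       = ∑' n, a (n+1) * z^(n+1) - (∑' n, a (n+1) * z^(n+1)) * z by ring, hT2, hT1]
  ring

lemma part1 (z : ℝ) (hz : |z| < 1) :
    iteratedDeriv 2 (fun s : ℝ => ∑' n : ℕ, (Nat.factorial n : ℝ) / poch s n * z ^ n) 1
      = ∑' n : ℕ, (H (n + 1) ^ 2 + H2 (n + 1)) * z ^ (n + 1) := by
  set r : ℝ := (1 + |z|) / 2 with hrdef
  have hr0 : 0 < r := by positivity
  have hr1 : r < 1 := by rw [hrdef]; linarith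
  have hzr : ∀ n : ℕ, |z| ^ n ≤ r ^ n := fun n =>
    pow_le_pow_left₀ (abs_nonneg z) (by rw [hrdef]; linarith [abs_nonneg z]) n
  have ht : IsOpen (Set.Ioo (1/2 : ℝ) 2) := isOpen_Ioo
  have ht' : IsPreconnected (Set.Ioo (1/2 : ℝ) 2) := isPreconnected_Ioo
  have h1t : (1 : ℝ) ∈ Set.Ioo (1/2 : ℝ) 2 := by constructor <;> norm_num
  have hspos : ∀ s ∈ Set.Ioo (1/2 : ℝ) 2, (0 : ℝ) < s := fun s hs => by
    have := hs.1; linarith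
  -- termwise derivatives
  have hd0 : ∀ (n : ℕ), ∀ s ∈ Set.Ioo (1/2 : ℝ) 2,
      HasDerivAt (fun x => (Nat.factorial n : ℝ) / poch x n * z ^ n) (F1x z n s) s :=
    fun n s hs => (hasDerivAt_g n (hspos s hs)).mul_const (z ^ n)
  have hd1 : ∀ (n : ℕ), ∀ s ∈ Set.Ioo (1/2 : ℝ) 2,
      HasDerivAt (fun x => F1x z n x) (F2x z n s) s :=
    fun n s hs => (hasDerivAt_gL n (hspos s hs)).mul_const (z ^ n)
  -- bounds
  have hb1 : ∀ (n : ℕ), ∀ s ∈ Set.Ioo (1/2 : ℝ) 2,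
      ‖F1x z n s‖ ≤ 4 * (((n : ℝ) + 1) ^ 2 * r ^ n) := by
    intro n s hs
    have hs2 := hs.1
    have hs0 := hspos s hs
    have h0 : (0:ℝ) ≤ (n:ℝ) := Nat.cast_nonneg n
    have hg0 := g_nonneg hs0 n; have hg1 := g_le hs2 n
    have hL0 := Lh_nonneg hs0 n; have hL1 := Lh_le hs2 n
    have habs : ‖F1x z n s‖ = (Nat.factorial n : ℝ) / poch s n * Lh n s * |z| ^ n := by
      rw [F1x, Real.norm_eq_abs, abs_mul, abs_neg, abs_pow,
        abs_of_nonneg (mul_nonneg hg0 hL0)]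
    rw [habs]
    have hzn := hzr n
    have hp0 : (0:ℝ) ≤ |z| ^ n := pow_nonneg (abs_nonneg z) n
    have hr0' : (0:ℝ) ≤ r ^ n := pow_nonneg hr0.le n
    have hgl : (Nat.factorial n : ℝ) / poch s n * Lh n s ≤ 4 * ((n : ℝ) + 1) ^ 2 := by
      nlinarith [mul_le_mul hg1 hL1 hL0 (by positivity : (0:ℝ) ≤ 2 * ((n:ℝ) + 1))]
    calc (Nat.factorial n : ℝ) / poch s n * Lh n s * |z| ^ n
        ≤ 4 * ((n : ℝ) + 1) ^ 2 * r ^ n :=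
          mul_le_mul hgl hzn hp0 (by positivity)
      _ = 4 * (((n : ℝ) + 1) ^ 2 * r ^ n) := by ring
  have hb2 : ∀ (n : ℕ), ∀ s ∈ Set.Ioo (1/2 : ℝ) 2,
      ‖F2x z n s‖ ≤ 16 * (((n : ℝ) + 1) ^ 3 * r ^ n) := by
    intro n s hs
    have hs2 := hs.1
    have hs0 := hspos s hs
    have h0 : (0:ℝ) ≤ (n:ℝ) := Nat.cast_nonneg n
    have hg0 := g_nonneg hs0 n; have hg1 := g_le hs2 n
    have hL0 := Lh_nonneg hs0 n; have hL1 := Lh_le hs2 n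
    have hQ0 := Qh_nonneg hs0 n; have hQ1 := Qh_le hs2 n
    have habs : ‖F2x z n s‖
        = (Nat.factorial n : ℝ) / poch s n * (Lh n s ^ 2 + Qh n s) * |z| ^ n := by
      rw [F2x, Real.norm_eq_abs, abs_mul, abs_pow,
        abs_of_nonneg (mul_nonneg hg0 (by positivity))]
    rw [habs]
    have hzn := hzr n
    have hp0 : (0:ℝ) ≤ |z| ^ n := pow_nonneg (abs_nonneg z) n
    have hr0' : (0:ℝ) ≤ r ^ n := pow_nonneg hr0.le n
    have hLQ : Lh n s ^ 2 + Qh n s ≤ 4 * (n:ℝ) ^ 2 + 4 * n := by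
      nlinarith [pow_le_pow_left₀ hL0 hL1 2]
    have hgl : (Nat.factorial n : ℝ) / poch s n * (Lh n s ^ 2 + Qh n s)
        ≤ 16 * ((n : ℝ) + 1) ^ 3 := by
      nlinarith [mul_le_mul hg1 hLQ (by positivity) (by positivity : (0:ℝ) ≤ 2 * ((n:ℝ) + 1))]
    calc (Nat.factorial n : ℝ) / poch s n * (Lh n s ^ 2 + Qh n s) * |z| ^ n
        ≤ 16 * ((n : ℝ) + 1) ^ 3 * r ^ n :=
          mul_le_mul hgl hzn hp0 (by positivity)
      _ = 16 * (((n : ℝ) + 1) ^ 3 * r ^ n) := by ring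
  -- summability at the base point
  have hS0 : Summable (fun n : ℕ => (Nat.factorial n : ℝ) / poch 1 n * z ^ n) := by
    refine Summable.congr (summable_geometric_of_norm_lt_one
      (by rwa [Real.norm_eq_abs] : ‖z‖ < 1)) fun n => ?_
    rw [poch_one, div_self (by exact_mod_cast (Nat.factorial_pos n).ne' : (Nat.factorial n : ℝ) ≠ 0), one_mul]
  have hS1 : Summable (fun n : ℕ => F1x z n 1) :=
    summable_dom 2 4 hr0 hr1 fun n => by
      rw [← Real.norm_eq_abs]; exact hb1 n 1 h1t
  have hu1 : Summable (fun n : ℕ => 4 * (((n : ℝ) + 1) ^ 2 * r ^ n)) :=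
    (summable_npow_geo 2 hr0 hr1).mul_left 4
  have hu2 : Summable (fun n : ℕ => 16 * (((n : ℝ) + 1) ^ 3 * r ^ n)) :=
    (summable_npow_geo 3 hr0 hr1).mul_left 16
  -- differentiate the sum twice
  have h1 : ∀ y ∈ Set.Ioo (1/2 : ℝ) 2,
      HasDerivAt (fun x : ℝ => ∑' n : ℕ, (Nat.factorial n : ℝ) / poch x n * z ^ n)
        (∑' n : ℕ, F1x z n y) y := fun y hy =>
    hasDerivAt_tsum_of_isPreconnected hu1 ht ht'
      (fun n x hx => hd0 n x hx) (fun n x hx => hb1 n x hx) h1t hS0 hy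
  have h2 : ∀ y ∈ Set.Ioo (1/2 : ℝ) 2,
      HasDerivAt (fun x : ℝ => ∑' n : ℕ, F1x z n x) (∑' n : ℕ, F2x z n y) y := fun y hy =>
    hasDerivAt_tsum_of_isPreconnected hu2 ht ht'
      (fun n x hx => hd1 n x hx) (fun n x hx => hb2 n x hx) h1t hS1 hy
  have heq : deriv (fun s : ℝ => ∑' n : ℕ, (Nat.factorial n : ℝ) / poch s n * z ^ n)
      =ᶠ[nhds (1:ℝ)] (fun s : ℝ => ∑' n : ℕ, F1x z n s) := by
    filter_upwards [ht.mem_nhds h1t] with y hy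
    exact (h1 y hy).deriv
  have hfinal : iteratedDeriv 2
      (fun s : ℝ => ∑' n : ℕ, (Nat.factorial n : ℝ) / poch s n * z ^ n) 1
        = ∑' n : ℕ, F2x z n 1 := by
    rw [show (2 : ℕ) = 1 + 1 from rfl, iteratedDeriv_succ, iteratedDeriv_one]
    rw [heq.deriv_eq]
    exact (h2 1 h1t).deriv
  rw [hfinal]
  -- evaluate at s = 1
  have hF2 : ∀ n : ℕ, F2x z n 1 = (H n ^ 2 + H2 n) * z ^ n := by
    intro n
    rw [F2x, poch_one, Lh_one, Qh_one,
      div_self (by exact_mod_cast (Nat.factorial_pos n).ne' : (Nat.factorial n : ℝ) ≠ 0), one_mul]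
  rw [tsum_congr hF2]
  -- drop the vanishing 0-th term
  have hsum : Summable (fun n : ℕ => (H n ^ 2 + H2 n) * z ^ n) := by
    refine summable_dom 2 2 hr0 hr1 fun n => ?_
    have h0 : (0:ℝ) ≤ (n:ℝ) := Nat.cast_nonneg n
    have hH1 := H_nonneg n; have hH2 := H_le n
    have hG1 := H2_nonneg n; have hG2 := H2_le n
    have hzn := hzr n
    have hp0 : (0:ℝ) ≤ |z| ^ n := pow_nonneg (abs_nonneg z) n
    have hr0' : (0:ℝ) ≤ r ^ n := pow_nonneg hr0.le n
    rw [abs_mul, abs_pow, abs_of_nonneg (by positivity)]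
    have hcoef : H n ^ 2 + H2 n ≤ 2 * ((n : ℝ) + 1) ^ 2 := by nlinarith
    calc (H n ^ 2 + H2 n) * |z| ^ n ≤ 2 * ((n : ℝ) + 1) ^ 2 * r ^ n :=
          mul_le_mul hcoef hzn hp0 (by positivity)
      _ = 2 * (((n : ℝ) + 1) ^ 2 * r ^ n) := by ring
  rw [Summable.tsum_eq_zero_add hsum]
  have hzero : (H 0 ^ 2 + H2 0) * z ^ 0 = 0 := by simp [H, H2]
  rw [hzero, zero_add]

/-- The second derivative at `s = 1` of `s ↦ ₂F₁(1,1;s;z) = ∑_{n≥0} (n!/(s)_n) z^n` equals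
`(2 Li₂(z) + log²(1-z))/(1-z)`; equivalently
`∑_{n=1}^∞ (H_n² + H_{n,2}) z^n = (2 Li₂(z) + log²(1-z))/(1-z)`. -/
theorem second_deriv_hypergeom (z : ℝ) (hz : |z| < 1) :
    iteratedDeriv 2 (fun s : ℝ => ∑' n : ℕ, (Nat.factorial n : ℝ) / poch s n * z ^ n) 1
        = (2 * Li2 z + Real.log (1 - z) ^ 2) / (1 - z) ∧
      ∑' n : ℕ, (H (n + 1) ^ 2 + H2 (n + 1)) * z ^ (n + 1)
        = (2 * Li2 z + Real.log (1 - z) ^ 2) / (1 - z) := by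
  exact ⟨(part1 z hz).trans (part2 z hz), part2 z hz⟩
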